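/- Under the hypotheses of the F-family, if in addition 1/6 ≤ b ≤ 1/4 and c ≥ 1/2, then the case L+ holds, i.e. m ≤ m̃. -/

import Mathlib

set_option maxHeartbeats 1000000

namespace FFamilyAux

private def P (a b c x : ℝ) : ℝ :=
  5*x^4 - 4*(a+b+c+1)*x^3 + 3*(a*b+a*c+b*c+a+b+c)*x^2
    - 2*(a*b*c+a*b+a*c+b*c)*x + a*b*c

variable {a b c : ℝ}

private lemma auxP (ha : 0 ≤ a) (hab : a ≤ b) (hb2 : b ≤ 1 / 4) (hc : 1 / 2 ≤ c)
    (hc1 : c ≤ 1) : P a b c (a/2 - a^2/4) ≤ 0 := by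
  have key : P a b c (a/2 - a^2/4)
      = (a^2/4)*(2*b - a + 3*a^2/4 - 1)*((c - (a/2 - a^2/4))*(1 - (a/2 - a^2/4)))
        - ((a/2 - a^2/4)*(a - (a/2 - a^2/4))*(b - (a/2 - a^2/4)))*(c + 1 - 2*(a/2 - a^2/4)) := by
    unfold P; ring
  rw [key]; clear key
  have ha4 : a ≤ 1/4 := le_trans hab hb2
  have hp0 : 0 ≤ a/2 - a^2/4 := by nlinarith
  have hpa : a/2 - a^2/4 ≤ a := by nlinarith
  have hpb : a/2 - a^2/4 ≤ b := by nlinarith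
  have hpc : a/2 - a^2/4 ≤ 1/8 := by nlinarith
  have h1 : 2*b - a + 3*a^2/4 - 1 ≤ 0 := by nlinarith
  have h2 : 0 ≤ (c - (a/2 - a^2/4))*(1 - (a/2 - a^2/4)) := by
    apply mul_nonneg <;> nlinarith
  have h3 : 0 ≤ (a/2 - a^2/4)*(a - (a/2 - a^2/4))*(b - (a/2 - a^2/4)) := by
    apply mul_nonneg (mul_nonneg hp0 (by linarith)) (by linarith)
  have h4 : 0 ≤ c + 1 - 2*(a/2 - a^2/4) := by nlinarith
  nlinarith [mul_nonneg (mul_nonneg (show (0:ℝ) ≤ a^2/4 by positivity)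
      (neg_nonneg.mpr h1)) h2, mul_nonneg h3 h4]

private lemma auxB (ha : 0 ≤ a) (hab : a ≤ b) (hb2 : b ≤ 1 / 4) (hc : 1 / 2 ≤ c)
    (hc1 : c ≤ 1) : P a b c ((a+b)/2 - a^2/4) ≤ 0 := by
  obtain ⟨q, hq⟩ : ∃ q : ℝ, q = (a+b)/2 - a^2/4 := ⟨_, rfl⟩
  rw [← hq]
  have ha4 : a ≤ 1/4 := le_trans hab hb2
  have key : P a b c q
      = (q*(c+1-2*q))*((b-a)^2/4 - (a^2/4)^2)
        - ((b-a)^2/4 + (a+b)*(a^2/4) - 3*(a^2/4)^2)*((c-q)*(1-q)) := by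
    rw [hq]; unfold P; ring
  rw [key]; clear key
  have hq0 : 0 ≤ q := by rw [hq]; nlinarith
  have hq4 : q ≤ 1/4 := by rw [hq]; nlinarith
  have hT1 : 0 ≤ q*(c+1-2*q) := mul_nonneg hq0 (by nlinarith)
  have hT2 : 3/16 ≤ (c-q)*(1-q) := by nlinarith [sq_nonneg (c-q-1/4), sq_nonneg q]
  have he0 : (0:ℝ) ≤ a^2/4 := by positivity
  have he1 : a^2/4 ≤ 1/64 := by nlinarith
  have he3 : 3*(a^2/4) ≤ a + b := by nlinarith
  -- reduce to (b-a)^2/4 * (T1 - T2) ≤ (a^2/4)*(a+b-3*(a^2/4))*T2 + (a^2/4)^2*T1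
  rcases le_or_gt (q*(c+1-2*q)) ((c-q)*(1-q)) with hD | hD
  · nlinarith [mul_nonneg (sq_nonneg (b-a)) (sub_nonneg.mpr hD),
      mul_nonneg (mul_nonneg he0 (by linarith : (0:ℝ) ≤ a + b - 3*(a^2/4)))
        (by linarith : (0:ℝ) ≤ (c-q)*(1-q)),
      mul_nonneg (mul_nonneg he0 he0) hT1]
  · -- T1 > T2 forces q ≥ 21/100, hence a ≥ 17/100 and b - a ≤ 2/25
    have hql : 21/100 ≤ q := by
      by_contra hcon
      push_neg at hcon
      have : q*(c+1-2*q) - (c-q)*(1-q) ≤ 0 := by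
        nlinarith [mul_nonneg (show (0:ℝ) ≤ 21/100 - q by linarith)
            (show (0:ℝ) ≤ 79/100 - q by linarith),
          mul_nonneg (show (0:ℝ) ≤ c - 1/2 by linarith)
            (show (0:ℝ) ≤ 1 - 2*q by linarith)]
      linarith
    have hab42 : 42/100 ≤ a + b := by rw [hq] at hql; nlinarith
    have hal : 17/100 ≤ a := by linarith
    have hba : b - a ≤ 2/25 := by linarith
    have hel : 289/40000 ≤ a^2/4 := by nlinarith
    have hD2 : q*(c+1-2*q) - (c-q)*(1-q) ≤ 1/16 := by
      nlinarith [mul_nonneg (show (0:ℝ) ≤ 1/4 - q by linarith)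
          (show (0:ℝ) ≤ 3/4 - q by linarith),
        mul_nonneg (show (0:ℝ) ≤ c - 1/2 by linarith)
          (show (0:ℝ) ≤ 1 - 2*q by linarith)]
    have e1 : (b-a)^2/4 * (q*(c+1-2*q) - (c-q)*(1-q)) ≤ 1/10000 := by
      have hsq : (b-a)^2 ≤ 64/10000 := by nlinarith
      nlinarith [mul_le_mul hsq hD2 (by linarith) (by norm_num : (0:ℝ) ≤ 64/10000)]
    have e2 : 4/10000 ≤ (a^2/4)*(a+b-3*(a^2/4))*((c-q)*(1-q)) := by
      have h37 : 37/100 ≤ a + b - 3*(a^2/4) := by linarith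
      nlinarith [mul_le_mul hel h37 (by norm_num) (by linarith : (0:ℝ) ≤ a^2/4),
        mul_le_mul (mul_le_mul hel h37 (by norm_num) (by linarith : (0:ℝ) ≤ a^2/4))
          hT2 (by norm_num) (mul_nonneg he0 (by linarith))]
    nlinarith [mul_nonneg (mul_nonneg he0 he0) hT1]

private lemma aux3 (ha : 0 ≤ a) (hab : a ≤ b) (hb1 : 1 / 6 ≤ b)
    (hb2 : b ≤ 1 / 4) (hc : 1 / 2 ≤ c) (hc1 : c ≤ 1) : 0 < P a b c (11*b/10) := by
  have hc0 : (0:ℝ) ≤ c := by linarith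
  have key : P a b c (11*b/10)
      = (b/2000) * (b*(460*c - 528*b - 528*b*c + 605*b^2)
          + (b-a)*(2400*c - 2860*b - 2860*b*c + 3388*b^2)) := by unfold P; ring
  rw [key]; clear key
  have hR : 0 < 460*c - 528*b - 528*b*c + 605*b^2 := by
    nlinarith [mul_nonneg (show (0:ℝ) ≤ 1/4 - b by linarith) hc0, sq_nonneg b]
  have hS : 0 ≤ 2400*c - 2860*b - 2860*b*c + 3388*b^2 := by
    nlinarith [mul_nonneg (show (0:ℝ) ≤ c - 1/2 by linarith)
        (show (0:ℝ) ≤ 2400 - 2860*b by linarith),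
      mul_nonneg (show (0:ℝ) ≤ 1 - 4*b by linarith) (show (0:ℝ) ≤ 1200 - 847*b by linarith)]
  have hbpos : 0 < b := by linarith
  exact mul_pos (by linarith) (add_pos_of_pos_of_nonneg (mul_pos hbpos hR)
    (mul_nonneg (sub_nonneg.mpr hab) hS))

private lemma aux4 (ha : 0 ≤ a) (hab : a ≤ b) (hb1 : 1 / 6 ≤ b)
    (hb2 : b ≤ 1 / 4) (hc : 1 / 2 ≤ c) (hc1 : c ≤ 1) : 0 ≤ P a b c (8*b/5) := by
  have hb0 : (0:ℝ) ≤ b := by linarith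
  have key : P a b c (8*b/5)
      = (b/125) * (b*(560*c - 1088*b - 1088*b*c + 2048*b^2)
          + a*(-275*c + 560*b + 560*b*c - 1088*b^2)) := by unfold P; ring
  rw [key]; clear key
  have hV : 0 ≤ 560*c - 1088*b - 1088*b*c + 2048*b^2 := by
    nlinarith [mul_nonneg (show (0:ℝ) ≤ c - 1/2 by linarith)
        (show (0:ℝ) ≤ 560 - 1088*b by linarith),
      mul_nonneg (show (0:ℝ) ≤ 1 - 4*b by linarith) (show (0:ℝ) ≤ 35 - 64*b by linarith)]
  have hZ : 0 ≤ b*(560*c - 1088*b - 1088*b*c + 2048*b^2)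
      + a*(-275*c + 560*b + 560*b*c - 1088*b^2) := by
    rcases le_or_gt 0 (-275*c + 560*b + 560*b*c - 1088*b^2) with hT | hT
    · exact add_nonneg (mul_nonneg hb0 hV) (mul_nonneg ha hT)
    · have hW : 0 ≤ 285*c - 528*b - 528*b*c + 960*b^2 := by
        nlinarith [mul_nonneg (show (0:ℝ) ≤ c - 1/2 by linarith)
            (show (0:ℝ) ≤ 285 - 528*b by linarith),
          mul_nonneg (show (0:ℝ) ≤ 1 - 4*b by linarith)
            (show (0:ℝ) ≤ 142.5 - 240*b by linarith)]
      nlinarith [mul_nonneg hb0 hW,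
        mul_nonneg (sub_nonneg.mpr hab) (show (0:ℝ) ≤ 275*c - 560*b - 560*b*c + 1088*b^2 by linarith)]
  exact mul_nonneg (by linarith) hZ

private lemma aux5 (ha : 0 ≤ a) (hab : a ≤ b) (hbc : b ≤ c) (hc1 : c ≤ 1) :
    P a b c ((c+1)/2) ≤ 0 := by
  have key : P a b c ((c+1)/2)
      = -((1-c)/2)^2 * (((c+1)/2-a)*((c+1)/2-b) + ((c+1)/2)*((c+1)/2-b)
          + ((c+1)/2)*((c+1)/2-a)) := by unfold P; ring
  rw [key]; clear key
  have hma : (0:ℝ) ≤ (c+1)/2 - a := by linarith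
  have hmb : (0:ℝ) ≤ (c+1)/2 - b := by linarith
  have hm0 : (0:ℝ) ≤ (c+1)/2 := by linarith
  nlinarith [sq_nonneg ((1-c)/2), mul_nonneg hma hmb, mul_nonneg hm0 hmb, mul_nonneg hm0 hma,
    mul_nonneg (sq_nonneg ((1-c)/2)) (add_nonneg (add_nonneg (mul_nonneg hma hmb)
      (mul_nonneg hm0 hmb)) (mul_nonneg hm0 hma))]

private lemma aux6 (ha : 0 ≤ a) (hab : a ≤ b) (hbc : b ≤ c) (hc1 : c ≤ 1)
    (hb1 : 1 / 6 ≤ b) (hb2 : b ≤ 1 / 4) (hc : 1 / 2 ≤ c) :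
    P a b c ((c+1-b)/2) ≤ 0 := by
  have hb0 : (0:ℝ) ≤ b := by linarith
  have hc0 : (0:ℝ) ≤ c := by linarith
  have key : P a b c ((c+1-b)/2)
      = (-3/16 + (3/8)*c^2 - (3/16)*c^4 + b/2 - b*c - b*c^2 + (1/2)*b*c^3 + (3/8)*b^2
          + (5/2)*b^2*c + (3/8)*b^2*c^2 - (3/2)*b^3 - (3/2)*b^3*c + (13/16)*b^4)
        + a*(1/4 - c/4 - c^2/4 + c^3/4 - b/4 + (3/2)*b*c - (1/4)*b*c^2 - (5/4)*b^2
          - (5/4)*b^2*c + (5/4)*b^3) := by unfold P; ring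
  rw [key]; clear key
  have hg1 : 0 ≤ 1/4 - c/4 - c^2/4 + c^3/4 - b/4 + (3/2)*b*c - (1/4)*b*c^2 - (5/4)*b^2
      - (5/4)*b^2*c + (5/4)*b^3 := by
    nlinarith [sq_nonneg (1-c), sq_nonneg (c-b),
      mul_nonneg (show (0:ℝ) ≤ 1-c by linarith) (sq_nonneg (1-c)),
      mul_nonneg (show (0:ℝ) ≤ 1/4 - b by linarith) hc0,
      mul_nonneg (show (0:ℝ) ≤ 1/4 - b by linarith) (sq_nonneg c), sq_nonneg b,
      mul_nonneg hb0 hc0]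
  have h0 : (-3/16 + (3/8)*c^2 - (3/16)*c^4 + b/2 - b*c - b*c^2 + (1/2)*b*c^3 + (3/8)*b^2
      + (5/2)*b^2*c + (3/8)*b^2*c^2 - (3/2)*b^3 - (3/2)*b^3*c + (13/16)*b^4)
      + b*(1/4 - c/4 - c^2/4 + c^3/4 - b/4 + (3/2)*b*c - (1/4)*b*c^2 - (5/4)*b^2
        - (5/4)*b^2*c + (5/4)*b^3) ≤ 0 := by
    nlinarith [sq_nonneg (1-c), sq_nonneg (c-1/2),
      mul_nonneg (show (0:ℝ) ≤ 1-c by linarith) (sq_nonneg (1-c)),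
      sq_nonneg ((1-c)*(1+c)),
      mul_nonneg (show (0:ℝ) ≤ 1/4-b by linarith) hc0,
      mul_nonneg (show (0:ℝ) ≤ b-1/6 by linarith) (show (0:ℝ) ≤ 1/4-b by linarith),
      mul_nonneg hb0 (sq_nonneg (1-c)), sq_nonneg (b-1/6), sq_nonneg (b-1/4),
      mul_nonneg (show (0:ℝ) ≤ c-1/2 by linarith) (show (0:ℝ) ≤ 1-c by linarith)]
  nlinarith [mul_nonneg (sub_nonneg.mpr hab) hg1]

end FFamilyAux

open FFamilyAux

set_option maxHeartbeats 1000000 in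
/-- For `F(x) = x(x-a)(x-b)(x-c)(x-1)` with `0 ≤ a ≤ b ≤ c ≤ 1`, `1/6 ≤ b ≤ 1/4` and
`c ≥ 1/2`, the case L+ holds: `m ≤ m̃`. -/
theorem F_family_b_sixth_quarter_Lplus
    (a b c : ℝ) (ha : 0 ≤ a) (hab : a ≤ b) (hbc : b ≤ c) (hc1 : c ≤ 1)
    (hb1 : 1 / 6 ≤ b) (hb2 : b ≤ 1 / 4) (hc : 1 / 2 ≤ c)
    (ξ₁ ξ₂ ξ₃ ξ₄ : ℝ) (hξ12 : ξ₁ ≤ ξ₂) (hξ23 : ξ₂ ≤ ξ₃) (hξ34 : ξ₃ ≤ ξ₄)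
    (hder : ∀ x : ℝ,
      deriv (fun t : ℝ => t * (t - a) * (t - b) * (t - c) * (t - 1)) x
        = 5 * (x - ξ₁) * (x - ξ₂) * (x - ξ₃) * (x - ξ₄))
    (z₁ z₂ z₃ z₄ m mt : ℝ)
    (hz₁ : z₁ = a / 2) (hz₂ : z₂ = (a + b) / 2)
    (hz₃ : z₃ = (b + c) / 2) (hz₄ : z₄ = (c + 1) / 2)
    (hm : m = min (min (z₂ - z₁) (z₃ - z₂)) (z₄ - z₃))
    (hmt : mt = min (min (ξ₂ - ξ₁) (ξ₃ - ξ₂)) (ξ₄ - ξ₃)) :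
    m ≤ mt := by
  -- The product form of the derivative equals the explicit quartic polynomial.
  have hG : ∀ x : ℝ, 5 * (x - ξ₁) * (x - ξ₂) * (x - ξ₃) * (x - ξ₄) = P a b c x := by
    intro x
    have hF : HasDerivAt (fun t : ℝ => t * (t - a) * (t - b) * (t - c) * (t - 1))
        (P a b c x) x := by
      have h := ((((hasDerivAt_id x).mul ((hasDerivAt_id x).sub_const a)).mul
        ((hasDerivAt_id x).sub_const b)).mul ((hasDerivAt_id x).sub_const c)).mul
        ((hasDerivAt_id x).sub_const 1)
      refine h.congr_deriv ?_
      simp only [id, Pi.mul_apply]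
      unfold P
      ring
    rw [← hder x, hF.deriv]
  -- Sign lemmas for the quartic product.
  have Lle : ∀ t : ℝ, 5 * (t - ξ₁) * (t - ξ₂) * (t - ξ₃) * (t - ξ₄) ≤ 0 →
      (ξ₁ ≤ t ∧ t ≤ ξ₂) ∨ (ξ₃ ≤ t ∧ t ≤ ξ₄) := by
    intro t h
    by_contra hcon
    push_neg at hcon
    obtain ⟨h1, h2⟩ := hcon
    rcases le_or_gt ξ₁ t with ha1 | ha1
    · have hb1' : ξ₂ < t := h1 ha1
      have p1 : 0 < t - ξ₁ := by linarith
      have p2 : 0 < t - ξ₂ := by linarith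
      rcases le_or_gt ξ₃ t with ha3 | ha3
      · have hb4 : ξ₄ < t := h2 ha3
        have p3 : 0 < t - ξ₃ := by linarith
        have p4 : 0 < t - ξ₄ := by linarith
        nlinarith [mul_pos (mul_pos p1 p2) (mul_pos p3 p4)]
      · have p3 : 0 < ξ₃ - t := by linarith
        have p4 : 0 < ξ₄ - t := by linarith
        nlinarith [mul_pos (mul_pos p1 p2) (mul_pos p3 p4)]
    · have p1 : 0 < ξ₁ - t := by linarith
      have p2 : 0 < ξ₂ - t := by linarith
      have p3 : 0 < ξ₃ - t := by linarith
      have p4 : 0 < ξ₄ - t := by linarith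
      nlinarith [mul_pos (mul_pos p1 p2) (mul_pos p3 p4)]
  have Lgt : ∀ t : ℝ, 0 < 5 * (t - ξ₁) * (t - ξ₂) * (t - ξ₃) * (t - ξ₄) →
      (t < ξ₁ ∨ ξ₂ < t) ∧ (t < ξ₃ ∨ ξ₄ < t) := by
    intro t h
    constructor
    · by_contra hcon
      push_neg at hcon
      obtain ⟨h1, h2⟩ := hcon
      have p1 : 0 ≤ t - ξ₁ := by linarith
      have p2 : 0 ≤ ξ₂ - t := by linarith
      have p3 : 0 ≤ ξ₃ - t := by linarith
      have p4 : 0 ≤ ξ₄ - t := by linarith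
      nlinarith [mul_nonneg (mul_nonneg p1 p2) (mul_nonneg p3 p4)]
    · by_contra hcon
      push_neg at hcon
      obtain ⟨h1, h2⟩ := hcon
      have p1 : 0 ≤ t - ξ₁ := by linarith
      have p2 : 0 ≤ t - ξ₂ := by linarith
      have p3 : 0 ≤ t - ξ₃ := by linarith
      have p4 : 0 ≤ ξ₄ - t := by linarith
      nlinarith [mul_nonneg (mul_nonneg p1 p2) (mul_nonneg p3 p4)]
  have Lge : ∀ t : ℝ, 0 ≤ 5 * (t - ξ₁) * (t - ξ₂) * (t - ξ₃) * (t - ξ₄) →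
      (t ≤ ξ₁ ∨ ξ₂ ≤ t) ∧ (t ≤ ξ₃ ∨ ξ₄ ≤ t) := by
    intro t h
    constructor
    · by_contra hcon
      push_neg at hcon
      obtain ⟨h1, h2⟩ := hcon
      have p1 : 0 < t - ξ₁ := by linarith
      have p2 : 0 < ξ₂ - t := by linarith
      have p3 : 0 < ξ₃ - t := by linarith
      have p4 : 0 < ξ₄ - t := by linarith
      nlinarith [mul_pos (mul_pos p1 p2) (mul_pos p3 p4)]
    · by_contra hcon
      push_neg at hcon
      obtain ⟨h1, h2⟩ := hcon
      have p1 : 0 < t - ξ₁ := by linarith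
      have p2 : 0 < t - ξ₂ := by linarith
      have p3 : 0 < t - ξ₃ := by linarith
      have p4 : 0 < ξ₄ - t := by linarith
      nlinarith [mul_pos (mul_pos p1 p2) (mul_pos p3 p4)]
  have hb0 : (0:ℝ) ≤ b := by linarith
  have hc0 : (0:ℝ) ≤ c := by linarith
  -- Point evaluations.
  -- ξ₁ ≤ a/2 - a²/4
  have PP : 5 * ((a/2 - a^2/4) - ξ₁) * ((a/2 - a^2/4) - ξ₂) * ((a/2 - a^2/4) - ξ₃)
      * ((a/2 - a^2/4) - ξ₄) ≤ 0 := by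
    rw [hG (a/2 - a^2/4)]; exact auxP ha hab hb2 hc hc1
  have A1 : ξ₁ ≤ a/2 - a^2/4 := by
    rcases Lle _ PP with ⟨h, _⟩ | ⟨h, _⟩
    · exact h
    · exact (hξ12.trans hξ23).trans h
  have ha4 : a ≤ 1/4 := le_trans hab hb2
  have hA1' : ξ₁ ≤ b/2 := by nlinarith
  have P5 : 5 * ((c+1)/2 - ξ₁) * ((c+1)/2 - ξ₂) * ((c+1)/2 - ξ₃) * ((c+1)/2 - ξ₄) ≤ 0 := by
    rw [hG ((c+1)/2)]; exact aux5 ha hab hbc hc1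
  have A5 : (c+1)/2 ≤ ξ₄ := by
    rcases Lle _ P5 with ⟨_, h⟩ | ⟨_, h⟩
    · exact h.trans (hξ23.trans hξ34)
    · exact h
  -- P3 : G(11b/10) > 0, hence ξ₂ < 11b/10 < ξ₃
  have P3 : 0 < 5 * (11*b/10 - ξ₁) * (11*b/10 - ξ₂) * (11*b/10 - ξ₃) * (11*b/10 - ξ₄) := by
    rw [hG (11*b/10)]; exact aux3 ha hab hb1 hb2 hc hc1
  have A3 : ξ₂ < 11*b/10 ∧ 11*b/10 < ξ₃ := by
    obtain ⟨h1, h2⟩ := Lgt _ P3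
    constructor
    · rcases h1 with h | h
      · linarith
      · exact h
    · rcases h2 with h | h
      · exact h
      · linarith
  -- P4 : G(8b/5) ≥ 0, hence ξ₃ ≥ 8b/5
  have P4 : 0 ≤ 5 * (8*b/5 - ξ₁) * (8*b/5 - ξ₂) * (8*b/5 - ξ₃) * (8*b/5 - ξ₄) := by
    rw [hG (8*b/5)]; exact aux4 ha hab hb1 hb2 hc hc1
  have A4 : 8*b/5 ≤ ξ₃ := by
    obtain ⟨_, h2⟩ := Lge _ P4
    rcases h2 with h | h
    · exact h
    · linarith
  -- P2 : G(b) ≤ 0, hence ξ₂ ≥ b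
  have PB : 5 * (((a+b)/2 - a^2/4) - ξ₁) * (((a+b)/2 - a^2/4) - ξ₂) * (((a+b)/2 - a^2/4) - ξ₃)
      * (((a+b)/2 - a^2/4) - ξ₄) ≤ 0 := by
    rw [hG ((a+b)/2 - a^2/4)]; exact auxB ha hab hb2 hc hc1
  have A2 : (a+b)/2 - a^2/4 ≤ ξ₂ := by
    rcases Lle _ PB with ⟨_, h⟩ | ⟨h, _⟩
    · exact h
    · exfalso
      have : (a+b)/2 - a^2/4 ≤ b := by nlinarith
      linarith [A3.2]
  -- P6 : G((c+1-b)/2) ≤ 0, hence ξ₃ ≤ (c+1-b)/2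
  have P6 : 5 * ((c+1-b)/2 - ξ₁) * ((c+1-b)/2 - ξ₂) * ((c+1-b)/2 - ξ₃) * ((c+1-b)/2 - ξ₄) ≤ 0 := by
    rw [hG ((c+1-b)/2)]; exact aux6 ha hab hbc hc1 hb1 hb2 hc
  have A6 : ξ₃ ≤ (c+1-b)/2 := by
    rcases Lle _ P6 with ⟨_, h⟩ | ⟨h, _⟩
    · linarith [A3.1]
    · exact h
  -- Combine.
  have g1 : b/2 ≤ ξ₂ - ξ₁ := by linarith
  have g2 : b/2 ≤ ξ₃ - ξ₂ := by linarith [A3.1]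
  have g3 : b/2 ≤ ξ₄ - ξ₃ := by linarith
  have hmval : m ≤ b/2 := by
    rw [hm, hz₁, hz₂]
    exact (min_le_left _ _).trans ((min_le_left _ _).trans (by linarith))
  rw [hmt]
  exact hmval.trans (le_min (le_min g1 g2) g3)
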